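/- Let A_cl ∈ ℝ^{n×n}, K ∈ ℝ^{m×n}, E ∈ ℝ^{n×p}, and let R ∈ ℝ^{m×m} and Q ∈ ℝ^{p×p} be symmetric positive semidefinite. Set Q_P := Kᵀ R K + E Q Eᵀ. Suppose P̃ ∈ ℝ^{n×n} is symmetric with P̃ − Q_P positive definite, and suppose the 2n × 2n block matrix [[P̃ − Q_P, A_clᵀ P̃], [P̃ A_cl, P̃]] is positive definite. Then P := P̃ − E Q Eᵀ is symmetric positive definite and satisfies A_clᵀ P A_cl − P + Kᵀ R K + A_clᵀ E Q Eᵀ A_cl ≺ 0 (i.e., this matrix is negative definite). -/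

import Mathlib

open Matrix

lemma real_isSymm_isHermitian {n : ℕ} {M : Matrix (Fin n) (Fin n) ℝ} (h : M.IsSymm) :
    M.IsHermitian := by
  rwa [Matrix.IsHermitian, Matrix.conjTranspose_eq_transpose_of_trivial]

/-- correctness of the terminal-cost design, Appendix A, LMI (44).
If `P̃` is symmetric with `P̃ - Q_P ≻ 0` (`Q_P = Kᵀ R K + E Q Eᵀ`) and the block
matrix `[[P̃ - Q_P, A_clᵀ P̃], [P̃ A_cl, P̃]]` is positive definite, then
`P := P̃ - E Q Eᵀ` is positive definite and satisfies the dissipation inequality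
`A_clᵀ P A_cl - P + Kᵀ R K + A_clᵀ E Q Eᵀ A_cl ≺ 0`. -/
theorem terminal_cost_design
    (n m p : ℕ)
    (Acl : Matrix (Fin n) (Fin n) ℝ) (K : Matrix (Fin m) (Fin n) ℝ)
    (E : Matrix (Fin n) (Fin p) ℝ)
    (R : Matrix (Fin m) (Fin m) ℝ) (Q : Matrix (Fin p) (Fin p) ℝ)
    (hR : R.PosSemidef) (hQ : Q.PosSemidef)
    (QP : Matrix (Fin n) (Fin n) ℝ) (hQP : QP = Kᵀ * R * K + E * Q * Eᵀ)
    (Pt : Matrix (Fin n) (Fin n) ℝ) (hPt : Pt.IsSymm)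
    (h1 : (Pt - QP).PosDef)
    (h2 : (Matrix.fromBlocks (Pt - QP) (Aclᵀ * Pt) (Pt * Acl) Pt).PosDef) :
    (Pt - E * Q * Eᵀ).PosDef ∧
      (-(Aclᵀ * (Pt - E * Q * Eᵀ) * Acl - (Pt - E * Q * Eᵀ)
          + Kᵀ * R * K + Aclᵀ * E * Q * Eᵀ * Acl)).PosDef := by
  have hPtH : Pt.IsHermitian := real_isSymm_isHermitian hPt
  have hKRK : (Kᵀ * R * K).PosSemidef := by
    have := hR.conjTranspose_mul_mul_same K
    rwa [Matrix.conjTranspose_eq_transpose_of_trivial] at this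
  -- Part 1
  have part1 : (Pt - E * Q * Eᵀ).PosDef := by
    have heq : Pt - E * Q * Eᵀ = (Pt - QP) + Kᵀ * R * K := by
      rw [hQP]; abel
    rw [heq]
    exact h1.add_posSemidef hKRK
  refine ⟨part1, ?_⟩
  -- Pt is positive definite
  have hPtPD : Pt.PosDef := by
    refine Matrix.PosDef.of_dotProduct_mulVec_pos hPtH (fun y hy => ?_)
    have hv : ((0 : Fin n → ℝ) ⊕ᵥ y) ≠ 0 := by
      intro h
      apply hy
      funext i
      exact congrFun h (Sum.inr i)
    have := h2.dotProduct_mulVec_pos hv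
    simpa [fromBlocks_mulVec, dotProduct, Fintype.sum_sum_type] using this
  have hPtInv : Invertible Pt := hPtPD.isUnit.invertible
  -- rewrite block matrix with conjTranspose
  have hBH : ((Aclᵀ * Pt)ᴴ) = Pt * Acl := by
    rw [Matrix.conjTranspose_mul, Matrix.conjTranspose_eq_transpose_of_trivial,
      Matrix.conjTranspose_eq_transpose_of_trivial, Matrix.transpose_transpose, hPt.eq]
  -- Schur complement is positive definite
  have hS : ((Pt - QP) - Aclᵀ * Pt * Acl).PosDef := by
    have hSform : (Pt - QP) - Aclᵀ * Pt * Acl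
        = (Pt - QP) - (Aclᵀ * Pt) * Pt⁻¹ * ((Aclᵀ * Pt)ᴴ) := by
      rw [hBH]
      congr 1
      have hdet : IsUnit Pt.det := (Matrix.isUnit_iff_isUnit_det Pt).mp hPtPD.isUnit
      rw [Matrix.mul_assoc (Aclᵀ * Pt), ← Matrix.mul_assoc Pt⁻¹,
        Matrix.nonsing_inv_mul _ hdet, Matrix.one_mul]
    refine Matrix.PosDef.of_dotProduct_mulVec_pos ?_ ?_
    · rw [hSform]
      have h21 := h2.1
      rw [← hBH] at h21
      exact ((Matrix.IsHermitian.fromBlocks₂₂ _ _ hPtH).mp h21)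
    · intro x hx
      set y : Fin n → ℝ := -((Pt⁻¹ * (Aclᵀ * Pt)ᴴ) *ᵥ x) with hy
      have hv : (x ⊕ᵥ y) ≠ 0 := by
        intro h
        apply hx
        funext i
        exact congrFun h (Sum.inl i)
      have hpos := h2.dotProduct_mulVec_pos hv
      rw [← hBH] at hpos
      rw [Matrix.dotProduct_mulVec] at hpos
      rw [schur_complement_eq₂₂ (Pt - QP) (Aclᵀ * Pt) _ _ hPtH] at hpos
      rw [hy] at hpos
      simp only [add_neg_cancel, star_zero, dotProduct_zero, zero_add] at hpos
      rw [← hSform] at hpos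
      rw [Matrix.dotProduct_mulVec]
      exact hpos
  -- conclude
  have heq2 : -(Aclᵀ * (Pt - E * Q * Eᵀ) * Acl - (Pt - E * Q * Eᵀ)
      + Kᵀ * R * K + Aclᵀ * E * Q * Eᵀ * Acl)
      = (Pt - QP) - Aclᵀ * Pt * Acl := by
    have hassoc : Aclᵀ * E * Q * Eᵀ * Acl = Aclᵀ * (E * Q * Eᵀ) * Acl := by
      simp [Matrix.mul_assoc]
    rw [hQP, hassoc]
    generalize E * Q * Eᵀ = G
    generalize Kᵀ * R * K = S
    noncomm_ring
  rw [heq2]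
  exact hS
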